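/- Let ε > 0 and δ ∈ (0,1) be such that k = (1/ε)·ln((e^ε + 2δ − 1)/((e^ε + 1)δ)) is a positive integer. Let π₀ be defined by π₀(0) = 0 and π₀(n+1) = min(e^ε·π₀(n) + δ, 1 − e^{−ε}·(1 − π₀(n) − δ), 1). Then for every n ∈ ℕ, π₀(n) = P[n + X ≥ k + 1], where X follows the k-truncated symmetric geometric distribution with success probability 1 − e^{−ε} (mass proportional to e^{−|x|ε} on x ∈ [−k,k]). -/

import Mathlib

open Real

/-- Mass function of the `k`-truncated symmetric geometric distribution with
success probability `1 - e^{-ε}`. -/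
noncomputable def tsgdMass (ε : ℝ) (k : ℕ) (x : ℤ) : ℝ :=
  if |x| ≤ (k : ℤ) then
    ((1 - exp (-ε)) / (1 + exp (-ε) - 2 * exp (-((k : ℝ) + 1) * ε))) *
      exp (-(|x| : ℝ) * ε)
  else 0

set_option maxHeartbeats 1000000 in
theorem noisy_thresholding_is_optimal
    (ε δ : ℝ) (hε : 0 < ε) (hδ0 : 0 < δ) (hδ1 : δ < 1)
    (k : ℕ) (hk1 : 1 ≤ k)
    (hk : (k : ℝ) = (1 / ε) * Real.log ((exp ε + 2 * δ - 1) / ((exp ε + 1) * δ)))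
    (π₀ : ℕ → ℝ) (h0 : π₀ 0 = 0)
    (hrec : ∀ n, π₀ (n + 1) =
      min (min (exp ε * π₀ n + δ) (1 - exp (-ε) * (1 - π₀ n - δ))) 1) :
    ∀ n : ℕ, π₀ n =
      ∑' x : {z : ℤ // (k : ℤ) + 1 ≤ (n : ℤ) + z}, tsgdMass ε k (x : ℤ) := by
  set E := exp ε with hEdef
  have hE1 : 1 < E := by
    have := Real.add_one_lt_exp (ne_of_gt hε)
    linarith
  set q := exp (-ε) with hqdef
  have hq0 : 0 < q := exp_pos _
  have hqE : q * E = 1 := by rw [hqdef, hEdef, ← exp_add]; simp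
  have hqinv : q = E⁻¹ := eq_inv_of_mul_eq_one_left hqE
  have hq1 : q < 1 := by rw [hqinv]; exact inv_lt_one_of_one_lt₀ hE1
  have hD : 0 < E - 1 := by linarith
  have hE0 : (0:ℝ) < E := by linarith
  -- key identity coming from the choice of k
  have hRpos : 0 < (exp ε + 2 * δ - 1) / ((exp ε + 1) * δ) := by
    apply div_pos <;> nlinarith
  have hEk : E ^ k * ((E + 1) * δ) = E + 2 * δ - 1 := by
    have h1 : E ^ k = (exp ε + 2 * δ - 1) / ((exp ε + 1) * δ) := by
      rw [hEdef, ← exp_nat_mul, hk, one_div, inv_mul_eq_div,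
        div_mul_cancel₀ _ (ne_of_gt hε)]
      exact exp_log hRpos
    rw [h1, div_mul_cancel₀]
    nlinarith
  have key : δ * (E^(k+1) + E^k - 2) = E - 1 := by
    have : E^(k+1) = E^k * E := pow_succ E k
    nlinarith [hEk]
  have hEq : (E+1) * δ * (E^k - 1) = (1-δ) * (E-1) := by
    have : E^(k+1) = E^k * E := pow_succ E k
    nlinarith [key]
  -- the normalizing constant
  have hcid : (1 - q)/(1 + q - 2*q^(k+1)) = δ * E^k := by
    have hq2 : q^(k+1) < 1 := pow_lt_one₀ hq0.le hq1 (by omega)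
    have hq3 : q^(k+1) ≤ q := by
      calc q^(k+1) ≤ q^1 := pow_le_pow_of_le_one hq0.le hq1.le (by omega)
      _ = q := pow_one q
    have hne : 1 + q - 2*q^(k+1) > 0 := by nlinarith
    rw [div_eq_iff (ne_of_gt hne), hqinv, inv_pow]
    field_simp
    linear_combination (-(E^(k+1))) * key
  -- mass values
  have hmassAbs : ∀ z : ℤ, z.natAbs ≤ k → tsgdMass ε k z = δ * E^(k - z.natAbs) := by
    intro z hz
    rw [tsgdMass, if_pos (by rw [Int.abs_eq_natAbs]; exact_mod_cast hz)]
    have h1 : exp (-((k:ℝ)+1)*ε) = q^(k+1) := by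
      rw [hqdef, ← exp_nat_mul]; congr 1; push_cast; ring
    have habs : |(z:ℝ)| = (z.natAbs : ℝ) := by simp [Nat.cast_natAbs]
    have h2 : exp (-|(z : ℝ)| * ε) = q^z.natAbs := by
      rw [habs, hqdef, ← exp_nat_mul]; congr 1; ring
    rw [h1, h2, hcid, hqinv, inv_pow, pow_sub₀ E (ne_of_gt hE0) hz]
    field_simp
  have hmass0 : ∀ z : ℤ, k < z.natAbs → tsgdMass ε k z = 0 := by
    intro z hz
    rw [tsgdMass, if_neg]
    rw [Int.abs_eq_natAbs]
    exact_mod_cast not_le.mpr (by exact_mod_cast hz)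
  have hmass1 : ∀ n : ℕ, n ≤ k → tsgdMass ε k ((k:ℤ) - n) = δ * E^n := by
    intro n hn
    rw [hmassAbs _ (by omega), show ((k:ℤ) - (n:ℤ)).natAbs = k - n by omega,
      show k - (k - n) = n by omega]
  have hmass2 : ∀ n : ℕ, k ≤ n → n ≤ 2*k → tsgdMass ε k ((k:ℤ) - n) = δ * E^(2*k-n) := by
    intro n hn hn2
    rw [hmassAbs _ (by omega), show ((k:ℤ) - (n:ℤ)).natAbs = n - k by omega,
      show k - (n - k) = 2*k - n by omega]
  have hmass3 : ∀ n : ℕ, 2*k+1 ≤ n → tsgdMass ε k ((k:ℤ) - n) = 0 := by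
    intro n hn
    exact hmass0 _ (by omega)
  -- the finite tail sum
  set F : ℕ → ℝ := fun n => ∑ z ∈ Finset.Icc ((k:ℤ)+1-n) k, tsgdMass ε k z with hFdef
  have htsum : ∀ n : ℕ,
      (∑' x : {z : ℤ // (k : ℤ) + 1 ≤ (n : ℤ) + z}, tsgdMass ε k (x : ℤ)) = F n := by
    intro n
    have e1 : (∑' x : {z : ℤ // (k : ℤ) + 1 ≤ (n : ℤ) + z}, tsgdMass ε k (x : ℤ))
        = ∑' z : ℤ, Set.indicator {z : ℤ | (k : ℤ) + 1 ≤ (n : ℤ) + z} (tsgdMass ε k) z :=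
      tsum_subtype {z : ℤ | (k : ℤ) + 1 ≤ (n : ℤ) + z} (tsgdMass ε k)
    rw [e1]
    rw [tsum_eq_sum (s := Finset.Icc ((k:ℤ)+1-n) k) ?_]
    · apply Finset.sum_congr rfl
      intro z hz
      simp only [Finset.mem_Icc] at hz
      exact Set.indicator_of_mem (by simp only [Set.mem_setOf_eq]; omega) _
    · intro b hb
      simp only [Finset.mem_Icc, not_and, not_le] at hb
      by_cases h : (k:ℤ) + 1 ≤ (n:ℤ) + b
      · rw [Set.indicator_of_mem (show b ∈ {z : ℤ | (k:ℤ)+1 ≤ (n:ℤ)+z} from h)]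
        exact hmass0 b (by omega)
      · exact Set.indicator_of_notMem (show b ∉ {z : ℤ | (k:ℤ)+1 ≤ (n:ℤ)+z} from h) _
  have hF0 : F 0 = 0 := by
    simp only [hFdef, Nat.cast_zero, sub_zero]
    rw [Finset.Icc_eq_empty (by omega), Finset.sum_empty]
  have hstep : ∀ n : ℕ, F (n+1) = tsgdMass ε k ((k:ℤ) - n) + F n := by
    intro n
    simp only [hFdef]
    have h1 : Finset.Icc ((k:ℤ)+1-(n+1:ℕ)) k = insert ((k:ℤ) - n) (Finset.Icc ((k:ℤ)+1-n) k) := by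
      ext z
      simp only [Finset.mem_Icc, Finset.mem_insert]
      push_cast
      omega
    rw [h1, Finset.sum_insert (by simp only [Finset.mem_Icc]; omega)]
  -- closed forms
  have hFlow : ∀ n : ℕ, n ≤ k+1 → F n = δ*(E^n - 1)/(E-1) := by
    intro n
    induction n with
    | zero => intro _; rw [hF0]; simp
    | succ n ih =>
      intro h
      rw [hstep n, hmass1 n (by omega), ih (by omega), pow_succ]
      field_simp
      ring
  have hFhigh : ∀ j : ℕ, j ≤ k → F (k+1+j) = 1 - δ*(E^(k-j) - 1)/(E-1) := by
    intro j
    induction j with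
    | zero =>
      intro _
      rw [hFlow (k+1) le_rfl]
      simp only [Nat.add_zero, Nat.sub_zero]
      field_simp
      linear_combination key
    | succ j ih =>
      intro h
      rw [show k+1+(j+1) = (k+1+j)+1 by ring, hstep, hmass2 _ (by omega) (by omega),
        ih (by omega)]
      rw [show 2*k - (k+1+j) = k - (j+1) by omega, show k - j = (k - (j+1)) + 1 by omega,
        pow_succ]
      field_simp
      ring
  have hFtop : ∀ n : ℕ, 2*k+1 ≤ n → F n = 1 := by
    have haux : ∀ j : ℕ, F (2*k+1+j) = 1 := by
      intro j
      induction j with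
      | zero =>
        have h := hFhigh k le_rfl
        rw [show k+1+k = 2*k+1 by ring] at h
        simpa using h
      | succ j ih =>
        rw [show 2*k+1+(j+1) = (2*k+1+j)+1 by ring, hstep, hmass3 _ (by omega), ih]
        ring
    intro n hn
    have := haux (n - (2*k+1))
    rwa [show 2*k+1+(n-(2*k+1)) = n by omega] at this
  -- main induction
  have hmain : ∀ n : ℕ, π₀ n = F n := by
    intro n
    induction n with
    | zero => rw [h0, hF0]
    | succ n ih =>
      rw [hrec n, ih]
      rcases le_or_gt n k with hn | hn
      · -- growing phase
        rw [hFlow n (by omega), hFlow (n+1) (by omega)]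
        have hpow : E^n ≤ E^k := pow_le_pow_right₀ hE1.le hn
        have hpone : (1:ℝ) ≤ E^n := one_le_pow₀ hE1.le
        have hponek : (1:ℝ) ≤ E^k := one_le_pow₀ hE1.le
        have hA : E * (δ*(E^n-1)/(E-1)) + δ = δ*(E^(n+1) - 1)/(E-1) := by
          rw [pow_succ]; field_simp; ring
        have hA1 : δ*(E^(n+1) - 1)/(E-1) ≤ 1 := by
          rw [div_le_one hD]
          have hp : E^(n+1) ≤ E^(k+1) := pow_le_pow_right₀ hE1.le (by omega)
          nlinarith [key]
        have hAB : δ*(E^(n+1) - 1)/(E-1) ≤ 1 - q * (1 - δ*(E^n-1)/(E-1) - δ) := by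
          rw [hqinv, ← sub_nonneg]
          have hid : 1 - E⁻¹ * (1 - δ*(E^n-1)/(E-1) - δ) - δ*(E^(n+1) - 1)/(E-1)
              = ((E-1)*(1-δ) - (E+1)*δ*(E^n-1))/E := by
            rw [pow_succ]; field_simp; ring
          rw [hid]
          apply div_nonneg _ hE0.le
          nlinarith [mul_le_mul_of_nonneg_left hpow (by positivity : (0:ℝ) ≤ (E+1)*δ), hEq]
        rw [hA, min_eq_left hAB, min_eq_left hA1]
      · rcases le_or_gt n (2*k) with hn2 | hn2
        · -- shrinking phase
          obtain ⟨j, hj, rfl⟩ : ∃ j, j+1 ≤ k ∧ n = k+1+j := ⟨n-(k+1), by omega, by omega⟩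
          rw [hFhigh j (by omega), show k+1+j+1 = k+1+(j+1) by ring, hFhigh (j+1) (by omega)]
          rw [show k - j = (k - (j+1)) + 1 by omega]
          set a := k - (j+1) with ha
          have hpone : (1:ℝ) ≤ E^a := one_le_pow₀ hE1.le
          have hp : E^(a+2) ≤ E^(k+1) := pow_le_pow_right₀ hE1.le (by omega)
          have hB : 1 - q * (1 - (1 - δ*(E^(a+1) - 1)/(E-1)) - δ)
              = 1 - δ*(E^a - 1)/(E-1) := by
            rw [hqinv, pow_succ]; field_simp; ring
          have hB1 : 1 - δ*(E^a - 1)/(E-1) ≤ 1 := by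
            have : 0 ≤ δ*(E^a - 1)/(E-1) := by
              apply div_nonneg _ hD.le
              nlinarith
            linarith
          have hBA : 1 - δ*(E^a - 1)/(E-1) ≤ E * (1 - δ*(E^(a+1) - 1)/(E-1)) + δ := by
            rw [← sub_nonneg]
            have hid : E * (1 - δ*(E^(a+1) - 1)/(E-1)) + δ - (1 - δ*(E^a - 1)/(E-1))
                = ((E-1)*(E-1+δ) - δ*(E^(a+2) - E) + δ*(E^a - 1))/(E-1) := by
              rw [show a+2 = (a+1)+1 by ring, pow_succ, pow_succ]
              field_simp
              ring
            rw [hid]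
            apply div_nonneg _ hD.le
            have hpak : E^(a+1) ≤ E^(k+1) := pow_le_pow_right₀ hE1.le (by omega)
            have hNE : ((E-1)*(E-1+δ) - δ*(E^(a+2) - E) + δ*(E^a - 1)) * E
                = (E^2-1)*δ*(E^(k+1) - E^(a+1)) := by
              linear_combination (E - E^2) * key
            have hrhs : (0:ℝ) ≤ (E^2-1)*δ*(E^(k+1) - E^(a+1)) :=
              mul_nonneg (mul_nonneg (by nlinarith) hδ0.le) (by linarith)
            nlinarith [hNE, hrhs, hE0]
          rw [hB, min_eq_right hBA, min_eq_left hB1]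
        · -- saturated phase
          rw [hFtop n (by omega), hFtop (n+1) (by omega)]
          have h1 : (1:ℝ) ≤ E * 1 + δ := by nlinarith
          have h2 : (1:ℝ) ≤ 1 - q * (1 - 1 - δ) := by nlinarith
          rw [min_eq_right (le_min h1 h2)]
  intro n
  rw [hmain n, htsum n]
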